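/- If f is an ℓ-sequence of length λ and f is constant with value γ on an interval [α, α + ω^{β₁} + ... + ω^{β_k}] contained in λ (with each β_j > 0), then γ is a fixed point of φ̄_{β_j} for each j = 1, ..., k. -/

import Mathlib

open Ordinal Set

/-- The Veblen hierarchy: `phi 0 β = ω^β`, and for `α ≠ 0`, `phi α`
enumerates the common fixed points of all `phi b` with `b < α`. -/
noncomputable def phi (a : Ordinal) : Ordinal → Ordinal :=
  if a = 0 then fun b => omega0 ^ b
  else enumOrd {x | ∀ b, b < a → phi b x = x}
termination_by a
decreasing_by exact ‹_›

/-- The modified Veblen function `φ̄`. -/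
noncomputable def phib (a b : Ordinal) : Ordinal :=
  if b = 0 then 0
  else if a = 0 then omega0 ^ b
  else phi a (if b < omega0 then b - 1 else b)

/-- `ell γ` is the exponent of the last term of the Cantor normal form of `γ`;
`ell 0 = 0`. -/
noncomputable def ell (γ : Ordinal) : Ordinal :=
  (((Ordinal.CNF omega0 γ).getLast?).map Prod.fst).getD 0

/-- `f` is an ℓ-sequence of length `lam`. -/
def IsLSeq (lam : Ordinal) (f : Ordinal → Ordinal) : Prop :=
  (∀ ξ, ξ + 1 < lam → f (ξ + 1) ≤ ell (f ξ)) ∧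
  (∀ ξ β, 0 < β → ξ + omega0 ^ β < lam → phib β (f (ξ + omega0 ^ β)) ≤ ell (f ξ))

/-- `Cr a` is the range of `phib a` on nonzero inputs. -/
noncomputable def Cr (a : Ordinal) : Set Ordinal := phib a '' {b | 0 < b}

universe u v

theorem phi_zero_apply (b : Ordinal.{v}) : phi.{u,v} 0 b = omega0 ^ b := by
  rw [phi]; simp

theorem phi_def {a : Ordinal.{u}} (ha : a ≠ 0) :
    phi.{u,v} a = enumOrd {x : Ordinal.{v} | ∀ b, b < a → phi.{u,v} b x = x} := by
  rw [phi]; simp [ha]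

theorem S_eq_iInter (a : Ordinal.{u}) :
    {x : Ordinal.{v} | ∀ b, b < a → phi.{u,v} b x = x} =
      ⋂ i : (Iio a : Set Ordinal.{u}),
        Function.fixedPoints (phi.{u,v} i.1) := by
  ext x
  simp [Function.fixedPoints, Function.IsFixedPt, Subtype.forall]

/-- Main lemma: if `γ` is a common fixed point of all levels below `b`, then the
set of common fixed points below `b` is unbounded and `phi b` is normal. -/
theorem phi_main (b : Ordinal.{u}) (γ : Ordinal.{v})
    (h : ∀ c < b, phi.{u,v} c γ = γ) :
    ¬ BddAbove {x : Ordinal.{v} | ∀ c, c < b → phi.{u,v} c x = x} ∧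
      (b ≠ 0 → Order.IsNormal (phi.{u,v} b)) := by
  induction b using Ordinal.induction with
  | _ b IH =>
  have hnorm : ∀ c < b, Order.IsNormal (phi.{u,v} c) := by
    intro c hc
    rcases eq_or_ne c 0 with rfl | hc0
    · have : phi.{u,v} 0 = fun x => omega0 ^ x := funext phi_zero_apply
      rw [this]
      exact isNormal_opow one_lt_omega0
    · exact (IH c hc (fun c' hc' => h c' (hc'.trans hc))).2 hc0
  rcases eq_or_ne b 0 with rfl | hb0
  · constructor
    · rintro ⟨x, hx⟩
      have h1 : x + 1 ∈ {x : Ordinal.{v} | ∀ c, c < (0:Ordinal.{u}) → phi.{u,v} c x = x} := by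
        intro c hc; exact absurd hc (zero_le (a := c)).not_gt
      have := hx h1
      have h2 : x < x + 1 := lt_add_one x
      exact absurd this h2.not_ge
    · intro h0; exact absurd rfl h0
  · -- b ≠ 0
    have hγmem : ∀ c < b, γ ∈ {x : Ordinal.{v} | ∀ c', c' < c → phi.{u,v} c' x = x} :=
      fun c hc c' hc' => h c' (hc'.trans hc)
    have hγω : omega0 ^ γ = γ := by
      have := h 0 (pos_iff_ne_zero.2 hb0)
      rwa [phi_zero_apply] at this
    have hγ1 : (1 : Ordinal.{v}) ≤ γ := by
      rcases eq_zero_or_pos γ with rfl | hpos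
      · rw [opow_zero] at hγω; exact absurd hγω one_ne_zero
      · exact Ordinal.one_le_iff_ne_zero.2 hpos.ne'
    -- the map c ↦ phi c 0 is a strictly monotone map Iio b → Iic γ
    have hle : ∀ c < b, phi.{u,v} c 0 ≤ γ := by
      intro c hc
      rcases eq_or_ne c 0 with rfl | hc0
      · rw [phi_zero_apply, opow_zero]; exact hγ1
      · rw [phi_def hc0, enumOrd_zero]
        exact csInf_le' (hγmem c hc)
    have hsm : ∀ c' (_ : c' < b) c (_ : c < c'), phi.{u,v} c 0 < phi.{u,v} c' 0 := by
      intro c' hc' c hcc'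
      have hc'0 : c' ≠ 0 := fun hh => by simp [hh] at hcc'
      set x := phi.{u,v} c' 0 with hx
      have hxS : x ∈ {y : Ordinal.{v} | ∀ d, d < c' → phi.{u,v} d y = y} := by
        rw [hx, phi_def hc'0, enumOrd_zero]
        exact csInf_mem ⟨γ, hγmem c' hc'⟩
      have hx0 : 0 < x := by
        have h0x := hxS 0 (pos_iff_ne_zero.2 hc'0)
        rw [phi_zero_apply] at h0x
        rcases eq_zero_or_pos x with hx' | hx'
        · rw [hx', opow_zero] at h0x; exact absurd h0x one_ne_zero
        · exact hx'
      have := (hnorm c (hcc'.trans hc')).strictMono hx0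
      rwa [hxS c hcc'] at this
    have hsmall : Small.{v} (Iio b : Set Ordinal.{u}) := by
      refine small_of_injective (f := fun c : (Iio b : Set Ordinal.{u}) =>
        (⟨phi.{u,v} c.1 0, hle c.1 c.2⟩ : (Iic γ : Set Ordinal.{v}))) ?_
      rintro ⟨c, hc⟩ ⟨c', hc'⟩ hcc'
      simp only [Subtype.mk.injEq] at hcc' ⊢
      rcases lt_trichotomy c c' with hlt | heq | hlt
      · exact absurd (congrArg Subtype.val hcc') (hsm c' hc' c hlt).ne
      · exact heq
      · exact absurd (congrArg Subtype.val hcc').symm (hsm c hc c' hlt).ne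
    haveI := hsmall
    have hH : ∀ i : (Iio b : Set Ordinal.{u}), Order.IsNormal (phi.{u,v} i.1) :=
      fun i => hnorm i.1 i.2
    constructor
    · rw [S_eq_iInter]
      exact not_bddAbove_fp_family hH
    · intro _
      rw [phi_def hb0, S_eq_iInter, ← derivFamily_eq_enumOrd hH]
      exact isNormal_derivFamily _

theorem ell_le (γ : Ordinal.{u}) : ell γ ≤ γ := by
  unfold ell
  rcases h : (Ordinal.CNF omega0 γ).getLast? with _ | p
  · simp
  · simp only [Option.map_some, Option.getD_some]
    have hp : p ∈ Ordinal.CNF omega0 γ := by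
      obtain ⟨hne, rfl⟩ := List.mem_getLast?_eq_getLast (Option.mem_def.2 h)
      exact List.getLast_mem hne
    exact (Ordinal.CNF.fst_le_log hp).trans (Ordinal.log_le_self _ _)

theorem eps_of_ell_eq (γ : Ordinal.{u}) (hγ : γ ≠ 0) (h : ell γ = γ) :
    omega0 ^ γ = γ := by
  have h1 : omega0 ^ ell γ ≤ γ := by
    unfold ell
    rcases hh : (Ordinal.CNF omega0 γ).getLast? with _ | p
    · simp [Ordinal.one_le_iff_ne_zero.2 hγ]
    · simp only [Option.map_some, Option.getD_some]
      have hp : p ∈ Ordinal.CNF omega0 γ := by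
        obtain ⟨hne, rfl⟩ := List.mem_getLast?_eq_getLast (Option.mem_def.2 hh)
        exact List.getLast_mem hne
      calc omega0 ^ p.1 ≤ omega0 ^ Ordinal.log omega0 γ :=
            opow_le_opow_right omega0_pos (Ordinal.CNF.fst_le_log hp)
        _ ≤ γ := Ordinal.opow_log_le_self _ hγ
  rw [h] at h1
  exact h1.antisymm (Ordinal.right_le_opow γ one_lt_omega0)

theorem omega_le_eps {γ : Ordinal.{u}} (hγ : γ ≠ 0) (h : omega0 ^ γ = γ) :
    omega0 ≤ γ := by
  have h1 : (1 : Ordinal) ≤ γ := Ordinal.one_le_iff_ne_zero.2 hγ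
  calc omega0 = omega0 ^ (1:Ordinal) := (opow_one _).symm
    _ ≤ omega0 ^ γ := opow_le_opow_right omega0_pos h1
    _ = γ := h

theorem phib_of_omega_le {a : Ordinal.{u}} {γ : Ordinal.{v}} (ha : a ≠ 0) (hγ0 : γ ≠ 0)
    (hγ : omega0 ≤ γ) : phib a γ = phi.{u,v} a γ := by
  unfold phib
  simp [hγ0, ha, not_lt.2 hγ]

theorem stmt8' (lam α : Ordinal.{u}) (γ : Ordinal.{v}) (f : Ordinal.{u} → Ordinal.{v})
    (l : List Ordinal.{u})
    (hl : ∀ β ∈ l, 0 < β) (hf : IsLSeq lam f)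
    (hin : α + (l.map fun β => omega0 ^ β).sum < lam)
    (hconst : ∀ x, α ≤ x → x ≤ α + (l.map fun β => omega0 ^ β).sum → f x = γ) :
    ∀ β ∈ l, phib β γ = γ := by
  intro β hβ
  set g : Ordinal.{u} → Ordinal.{u} := fun β => omega0 ^ β with hg
  set SS := (l.map g).sum with hSS
  have hβSS : omega0 ^ β ≤ SS := by
    obtain ⟨l1, l2, rfl⟩ := List.append_of_mem hβ
    rw [hSS, List.map_append, List.sum_append, List.map_cons, List.sum_cons]
    calc omega0 ^ β ≤ omega0 ^ β + (l2.map g).sum := le_self_add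
      _ ≤ (l1.map g).sum + (omega0 ^ β + (l2.map g).sum) := le_add_self
  have hβpos := hl β hβ
  -- γ = ell γ via the successor condition
  have h1SS : (1 : Ordinal.{u}) ≤ SS :=
    le_trans (Ordinal.one_le_iff_ne_zero.2 (opow_pos β omega0_pos).ne') hβSS
  have hfα : f α = γ := hconst α le_rfl le_self_add
  have hfα1 : f (α + 1) = γ := hconst _ le_self_add (add_le_add_right h1SS α)
  have hα1lam : α + 1 < lam := lt_of_le_of_lt (add_le_add_right h1SS α) hin
  have hellγ : ell γ = γ := by
    have := hf.1 α hα1lam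
    rw [hfα, hfα1] at this
    exact (ell_le γ).antisymm this
  rcases eq_or_ne γ 0 with rfl | hγ0
  · unfold phib; simp
  have hεγ : omega0 ^ γ = γ := eps_of_ell_eq γ hγ0 hellγ
  have hωγ : omega0 ≤ γ := omega_le_eps hγ0 hεγ
  -- for every 0 < b ≤ β, phi b γ ≤ γ
  have hyp : ∀ b : Ordinal.{u}, 0 < b → b ≤ β → phi.{u,v} b γ ≤ γ := by
    intro b hb0 hbβ
    have hωb : omega0 ^ b ≤ SS := le_trans (opow_le_opow_right omega0_pos hbβ) hβSS
    have hble : α + omega0 ^ b ≤ α + SS := add_le_add_right hωb α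
    have hblam : α + omega0 ^ b < lam := lt_of_le_of_lt hble hin
    have h2 := hf.2 α b hb0 hblam
    rw [hfα, hconst _ le_self_add hble, hellγ] at h2
    rwa [phib_of_omega_le hb0.ne' hγ0 hωγ] at h2
  -- by induction, phi b γ = γ for all b ≤ β
  have key : ∀ b : Ordinal.{u}, b ≤ β → phi.{u,v} b γ = γ := by
    intro b
    induction b using Ordinal.induction with
    | _ b IH =>
    intro hbβ
    rcases eq_or_ne b 0 with rfl | hb0
    · rw [phi_zero_apply]; exact hεγ
    · have hfix : ∀ c < b, phi.{u,v} c γ = γ :=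
        fun c hc => IH c hc (hc.le.trans hbβ)
      have hnormal := (phi_main b γ hfix).2 hb0
      exact (hyp b (pos_iff_ne_zero.2 hb0) hbβ).antisymm
        hnormal.strictMono.le_apply
  rw [phib_of_omega_le hβpos.ne' hγ0 hωγ]
  exact key β le_rfl

theorem stmt8 (lam α γ : Ordinal) (f : Ordinal → Ordinal) (l : List Ordinal)
    (hl : ∀ β ∈ l, 0 < β) (hf : IsLSeq lam f)
    (hin : α + (l.map fun β => omega0 ^ β).sum < lam)
    (hconst : ∀ x, α ≤ x → x ≤ α + (l.map fun β => omega0 ^ β).sum → f x = γ) :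
    ∀ β ∈ l, phib β γ = γ :=
  stmt8' lam α γ f l hl hf hin hconst
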